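/- Let λ_n (n ≥ 1) be a strictly increasing sequence of positive reals tending to infinity and w_n > 0 with ∑ w_n/λ_n² < ∞. Then on each interval (λ_k, λ_{k+1}), the function F(z) = ∑_{n≥1} w_n (1/(λ_n − z) − λ_n/(λ_n² + 1)) is strictly increasing and continuous, tends to −∞ as z ↓ λ_k and to +∞ as z ↑ λ_{k+1}; hence for every α ∈ ℝ there is exactly one solution z ∈ (λ_k, λ_{k+1}) of F(z) = α. -/

import Mathlib

open Filter Set Topology

lemma term_eq (A z w' : ℝ) (h : A - z ≠ 0) :
    w' * (1 / (A - z) - A / (A ^ 2 + 1)) = w' * (1 + A * z) / ((A - z) * (A ^ 2 + 1)) := by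
  have h3 : A ^ 2 + 1 ≠ 0 := by positivity
  field_simp; ring_nf

lemma diff_eq (A z1 z2 w' : ℝ) (h1 : A - z1 ≠ 0) (h2 : A - z2 ≠ 0) :
    w' * (1 / (A - z2) - A / (A ^ 2 + 1)) - w' * (1 / (A - z1) - A / (A ^ 2 + 1))
      = w' * (z2 - z1) / ((A - z1) * (A - z2)) := by
  field_simp; ring

lemma aux_summable (lam w : ℕ → ℝ) (hpos : ∀ n, 0 < lam n)
    (htop : Filter.Tendsto lam Filter.atTop Filter.atTop)
    (hw : ∀ n, 0 < w n)
    (hwsum : Summable (fun n => w n / (lam n) ^ 2)) (z : ℝ) (hz : ∀ n, lam n - z ≠ 0) :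
    Summable (fun n => w n * (1 / (lam n - z) - lam n / ((lam n) ^ 2 + 1))) := by
  apply Summable.of_norm_bounded_eventually (g := fun n => (2 * (1 + |z|)) * (w n / (lam n) ^ 2))
    (hwsum.mul_left _)
  rw [Nat.cofinite_eq_atTop]
  filter_upwards [htop.eventually_ge_atTop (max 1 (2 * |z|))] with n hn
  have hA1 : (1:ℝ) ≤ lam n := le_trans (le_max_left _ _) hn
  have hA2 : 2 * |z| ≤ lam n := le_trans (le_max_right _ _) hn
  set A := lam n with hA
  have hA0 : 0 < A := hpos n
  have hd1 : A / 2 ≤ |A - z| := by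
    have h1 := abs_sub_abs_le_abs_sub A z
    rw [abs_of_pos hA0] at h1
    have := abs_nonneg z
    linarith
  have hnum : |1 + A * z| ≤ A * (1 + |z|) := by
    calc |1 + A * z| ≤ 1 + |A * z| := by
          have := abs_add_le (1:ℝ) (A * z); simpa using this
      _ ≤ A + A * |z| := by
          rw [abs_mul, abs_of_pos hA0]; nlinarith [abs_nonneg z]
      _ = A * (1 + |z|) := by ring
  rw [term_eq _ _ _ (hz n)]
  have hden : (A / 2) * A ^ 2 ≤ |(A - z) * (A ^ 2 + 1)| := by
    rw [abs_mul]
    have h2 : (A:ℝ) ^ 2 ≤ |A ^ 2 + 1| := by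
      rw [abs_of_pos (by positivity)]; nlinarith
    calc (A / 2) * A ^ 2 ≤ |A - z| * A ^ 2 := by nlinarith
      _ ≤ |A - z| * |A ^ 2 + 1| := by
          have := abs_nonneg (A - z); nlinarith
  have hdenpos : (0:ℝ) < (A / 2) * A ^ 2 := by positivity
  have : ‖w n * (1 + A * z) / ((A - z) * (A ^ 2 + 1))‖
      = (w n * |1 + A * z|) / |(A - z) * (A ^ 2 + 1)| := by
    rw [Real.norm_eq_abs, abs_div, abs_mul, abs_of_pos (hw n)]
  rw [this]
  calc (w n * |1 + A * z|) / |(A - z) * (A ^ 2 + 1)|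
      ≤ (w n * (A * (1 + |z|))) / ((A / 2) * A ^ 2) := by
        have hnn : 0 ≤ w n * (A * (1 + |z|)) := mul_nonneg (hw n).le (by positivity)
        apply div_le_div₀ hnn (mul_le_mul_of_nonneg_left hnum (hw n).le) hdenpos hden
    _ = 2 * (1 + |z|) * (w n / A ^ 2) := by
        field_simp

theorem stmt_15 (lam w : ℕ → ℝ) (hmono : StrictMono lam)
    (hpos : ∀ n, 0 < lam n)
    (htop : Filter.Tendsto lam Filter.atTop Filter.atTop)
    (hw : ∀ n, 0 < w n)
    (hwsum : Summable (fun n => w n / (lam n) ^ 2))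
    (F : ℝ → ℝ)
    (hF : F = fun z => ∑' n, w n * (1 / (lam n - z) - lam n / ((lam n) ^ 2 + 1)))
    (k : ℕ) :
    StrictMonoOn F (Set.Ioo (lam k) (lam (k + 1))) ∧
    ContinuousOn F (Set.Ioo (lam k) (lam (k + 1))) ∧
    Filter.Tendsto F (nhdsWithin (lam k) (Set.Ioi (lam k))) Filter.atBot ∧
    Filter.Tendsto F (nhdsWithin (lam (k + 1)) (Set.Iio (lam (k + 1)))) Filter.atTop ∧
    ∀ α : ℝ, ∃! z : ℝ, z ∈ Set.Ioo (lam k) (lam (k + 1)) ∧ F z = α := by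
  set f : ℕ → ℝ → ℝ := fun n z => w n * (1 / (lam n - z) - lam n / ((lam n) ^ 2 + 1)) with hfdef
  have hkk : lam k < lam (k + 1) := hmono (Nat.lt_succ_self k)
  have hne : ∀ z ∈ Ioo (lam k) (lam (k + 1)), ∀ n, lam n - z ≠ 0 := by
    intro z hz n
    rcases le_or_gt n k with h | h
    · have : lam n ≤ lam k := hmono.monotone h
      have : lam n < z := lt_of_le_of_lt this hz.1
      exact sub_ne_zero.mpr (ne_of_lt this)
    · have : lam (k + 1) ≤ lam n := hmono.monotone h
      have : z < lam n := lt_of_lt_of_le hz.2 this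
      exact sub_ne_zero.mpr (ne_of_gt this)
  have hsum : ∀ z ∈ Ioo (lam k) (lam (k + 1)), Summable (fun n => f n z) := fun z hz =>
    aux_summable lam w hpos htop hw hwsum z (hne z hz)
  -- key estimate
  have key : ∀ a b : ℝ, lam k < a → b < lam (k + 1) → ∃ L : ℝ, 0 ≤ L ∧
      ∀ z1 ∈ Icc a b, ∀ z2 ∈ Icc a b, z1 < z2 →
        0 < F z2 - F z1 ∧ F z2 - F z1 ≤ L * (z2 - z1) := by
    intro a b ha hb
    set d : ℕ → ℝ := fun n => if n ≤ k then a - lam k else lam n - b with hddef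
    have hd : ∀ n, 0 < d n := by
      intro n
      by_cases h : n ≤ k
      · simp only [hddef, if_pos h]; linarith
      · have : lam (k + 1) ≤ lam n := hmono.monotone (not_le.mp h)
        simp only [hddef, if_neg h]; linarith
    have hLsum : Summable (fun n => w n / d n ^ 2) := by
      apply Summable.of_norm_bounded_eventually (g := fun n => 4 * (w n / lam n ^ 2))
        (hwsum.mul_left _)
      rw [Nat.cofinite_eq_atTop]
      filter_upwards [htop.eventually_ge_atTop (2 * b), eventually_gt_atTop k] with n hn hnk
      have hdn : d n = lam n - b := by simp only [hddef, if_neg (not_le.mpr hnk)]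
      have hA0 : 0 < lam n := hpos n
      have h1 : lam n / 2 ≤ d n := by rw [hdn]; linarith
      have h2 : lam n ^ 2 / 4 ≤ d n ^ 2 := by nlinarith [hd n]
      rw [Real.norm_eq_abs, abs_of_nonneg (div_nonneg (hw n).le (sq_nonneg _))]
      calc w n / d n ^ 2 ≤ w n / (lam n ^ 2 / 4) :=
            div_le_div_of_nonneg_left (hw n).le (by positivity) h2
        _ = 4 * (w n / lam n ^ 2) := by field_simp
    refine ⟨∑' n, w n / d n ^ 2, tsum_nonneg fun n => div_nonneg (hw n).le (sq_nonneg _), ?_⟩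
    intro z1 hz1 z2 hz2 h12
    have hz1m : z1 ∈ Ioo (lam k) (lam (k + 1)) := ⟨lt_of_lt_of_le ha hz1.1, lt_of_le_of_lt hz1.2 hb⟩
    have hz2m : z2 ∈ Ioo (lam k) (lam (k + 1)) := ⟨lt_of_lt_of_le ha hz2.1, lt_of_le_of_lt hz2.2 hb⟩
    have hfac : ∀ n, d n ^ 2 ≤ (lam n - z1) * (lam n - z2) := by
      intro n
      by_cases h : n ≤ k
      · have hln : lam n ≤ lam k := hmono.monotone h
        have hdn : d n = a - lam k := by simp only [hddef, if_pos h]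
        have h1 : lam n - z1 ≤ -(d n) := by rw [hdn]; linarith [hz1.1]
        have h2 : lam n - z2 ≤ -(d n) := by rw [hdn]; linarith [hz2.1]
        nlinarith [hd n]
      · have hln : lam (k + 1) ≤ lam n := hmono.monotone (not_le.mp h)
        have hdn : d n = lam n - b := by simp only [hddef, if_neg h]
        have h1 : d n ≤ lam n - z1 := by rw [hdn]; linarith [hz1.2]
        have h2 : d n ≤ lam n - z2 := by rw [hdn]; linarith [hz2.2]
        nlinarith [hd n]
    have hfacpos : ∀ n, 0 < (lam n - z1) * (lam n - z2) := fun n =>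
      lt_of_lt_of_le (pow_pos (hd n) 2) (hfac n)
    set g : ℕ → ℝ := fun n => w n * (z2 - z1) / ((lam n - z1) * (lam n - z2)) with hgdef
    have hgsummable : Summable g :=
      ((hsum z2 hz2m).sub (hsum z1 hz1m)).congr fun n =>
        diff_eq (lam n) z1 z2 (w n) (hne z1 hz1m n) (hne z2 hz2m n)
    have hFdiff : F z2 - F z1 = ∑' n, g n := by
      rw [hF]
      dsimp only
      rw [← Summable.tsum_sub (hsum z2 hz2m) (hsum z1 hz1m)]
      exact tsum_congr fun n => diff_eq (lam n) z1 z2 (w n) (hne z1 hz1m n) (hne z2 hz2m n)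
    constructor
    · rw [hFdiff]
      refine Summable.tsum_pos hgsummable (fun n => ?_) 0 ?_
      · exact div_nonneg (mul_nonneg (hw n).le (by linarith)) (hfacpos n).le
      · exact div_pos (mul_pos (hw 0) (by linarith)) (hfacpos 0)
    · rw [hFdiff]
      have hper : ∀ n, g n ≤ (z2 - z1) * (w n / d n ^ 2) := by
        intro n
        have : g n ≤ w n * (z2 - z1) / d n ^ 2 :=
          div_le_div_of_nonneg_left (mul_nonneg (hw n).le (by linarith))
            (pow_pos (hd n) 2) (hfac n)
        calc g n ≤ w n * (z2 - z1) / d n ^ 2 := this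
          _ = (z2 - z1) * (w n / d n ^ 2) := by ring
      calc ∑' n, g n ≤ ∑' n, (z2 - z1) * (w n / d n ^ 2) :=
            Summable.tsum_le_tsum hper hgsummable (hLsum.mul_left _)
        _ = (z2 - z1) * ∑' n, w n / d n ^ 2 := tsum_mul_left
        _ = (∑' n, w n / d n ^ 2) * (z2 - z1) := mul_comm _ _
  -- strict monotonicity
  have hSM : StrictMonoOn F (Ioo (lam k) (lam (k + 1))) := by
    intro z1 h1 z2 h2 h12
    obtain ⟨L, -, hkey⟩ := key z1 z2 h1.1 h2.2
    have := (hkey z1 ⟨le_refl _, h12.le⟩ z2 ⟨h12.le, le_refl _⟩ h12).1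
    linarith
  -- continuity
  have hCO : ContinuousOn F (Ioo (lam k) (lam (k + 1))) := by
    intro z0 hz0
    obtain ⟨L, hL0, hkey⟩ := key ((lam k + z0) / 2) ((z0 + lam (k + 1)) / 2)
      (by linarith [hz0.1]) (by linarith [hz0.2])
    have hlip : LipschitzOnWith L.toNNReal F (Icc ((lam k + z0) / 2) ((z0 + lam (k + 1)) / 2)) := by
      apply LipschitzOnWith.of_dist_le_mul
      intro x hx y hy
      rw [Real.dist_eq, Real.dist_eq, Real.coe_toNNReal _ hL0]
      rcases lt_trichotomy x y with h | h | h
      · have h1 := hkey x hx y hy h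
        rw [abs_sub_comm (F x) (F y), abs_sub_comm x y, abs_of_pos h1.1,
          abs_of_pos (sub_pos.mpr h)]
        exact h1.2
      · subst h; simp
      · have h1 := hkey y hy x hx h
        rw [abs_of_pos h1.1, abs_of_pos (sub_pos.mpr h)]
        exact h1.2
    exact ((hlip.continuousOn).continuousAt
      (Icc_mem_nhds (by linarith [hz0.1]) (by linarith [hz0.2]))).continuousWithinAt
  -- monotonicity of individual terms
  have hterm_mono : ∀ n (z1 z2 : ℝ), z1 ≤ z2 → 0 < (lam n - z1) * (lam n - z2) →
      f n z1 ≤ f n z2 := by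
    intro n z1 z2 h12 hprod
    have h1 : lam n - z1 ≠ 0 := left_ne_zero_of_mul (ne_of_gt hprod)
    have h2 : lam n - z2 ≠ 0 := right_ne_zero_of_mul (ne_of_gt hprod)
    have hd := diff_eq (lam n) z1 z2 (w n) h1 h2
    have : 0 ≤ w n * (z2 - z1) / ((lam n - z1) * (lam n - z2)) :=
      div_nonneg (mul_nonneg (hw n).le (by linarith)) hprod.le
    simp only [hfdef]
    linarith [hd, this]
  set m := (lam k + lam (k + 1)) / 2 with hmdef
  have hm1 : lam k < m := by simp only [hmdef]; linarith
  have hm2 : m < lam (k + 1) := by simp only [hmdef]; linarith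
  have hmIoo : m ∈ Ioo (lam k) (lam (k + 1)) := ⟨hm1, hm2⟩
  -- tendsto atBot at lam k
  have hBot : Filter.Tendsto F (nhdsWithin (lam k) (Set.Ioi (lam k))) Filter.atBot := by
    set C : ℝ := ∑' n, ite (n = k) 0 (f n m) with hCdef
    have hub : ∀ z ∈ Ioc (lam k) m, F z ≤ f k z + C := by
      intro z hz
      have hzIoo : z ∈ Ioo (lam k) (lam (k + 1)) := ⟨hz.1, lt_of_le_of_lt hz.2 hm2⟩
      have hsz : Summable (fun n => ite (n = k) 0 (f n z)) :=
        ((hsum z hzIoo).update k 0).congr fun n => by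
          simp [Function.update_apply]
      have hsm : Summable (fun n => ite (n = k) 0 (f n m)) :=
        ((hsum m hmIoo).update k 0).congr fun n => by
          simp [Function.update_apply]
      have h1 : F z = f k z + ∑' n, ite (n = k) 0 (f n z) := by
        rw [hF]; exact Summable.tsum_eq_add_tsum_ite (hsum z hzIoo) k
      rw [h1, hCdef]
      have : (∑' n, ite (n = k) 0 (f n z)) ≤ ∑' n, ite (n = k) 0 (f n m) := by
        refine Summable.tsum_le_tsum (fun n => ?_) hsz hsm
        by_cases h : n = k
        · simp [h]
        · simp only [if_neg h]
          refine hterm_mono n z m hz.2 ?_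
          rcases le_or_gt n k with h' | h'
          · have hnk : n < k := lt_of_le_of_ne h' h
            have : lam n < lam k := hmono hnk
            apply mul_pos_of_neg_of_neg <;> linarith [hz.1, hm1]
          · have : lam (k + 1) ≤ lam n := hmono.monotone h'
            have hz2 : z < lam n := lt_of_le_of_lt hz.2 (lt_of_lt_of_le hm2 this)
            apply mul_pos <;> linarith [hm2]
      linarith
    have hrhs : Tendsto (fun z => f k z + C) (𝓝[>] (lam k)) atBot := by
      have heq : (fun z => f k z + C) =
          fun z => w k * (-(z - lam k)⁻¹) + (C - w k * (lam k / (lam k ^ 2 + 1))) := by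
        funext z
        simp only [hfdef]
        rw [one_div, ← neg_sub z (lam k), inv_neg]
        ring
      rw [heq]
      apply tendsto_atBot_add_const_right
      have t2 : Tendsto (fun z => z - lam k) (𝓝[>] (lam k)) (𝓝[>] 0) := by
        apply tendsto_nhdsWithin_of_tendsto_nhds_of_eventually_within
        · exact ((continuous_id.sub continuous_const).tendsto' (lam k) 0 (by simp)).mono_left
            nhdsWithin_le_nhds
        · exact eventually_mem_nhdsWithin.mono fun z hz => Set.mem_Ioi.mpr (sub_pos.mpr hz)
      have t3 : Tendsto (fun z => (z - lam k)⁻¹) (𝓝[>] (lam k)) atTop :=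
        tendsto_inv_nhdsGT_zero.comp t2
      have t4 : Tendsto (fun z => -(z - lam k)⁻¹) (𝓝[>] (lam k)) atBot :=
        tendsto_neg_atTop_atBot.comp t3
      exact (tendsto_const_mul_atBot_of_pos (hw k)).mpr t4
    refine tendsto_atBot_mono' _ ?_ hrhs
    filter_upwards [Ioc_mem_nhdsGT_of_mem (⟨le_refl _, hm1⟩ : lam k ∈ Ico (lam k) m)] with z hz
    exact hub z hz
  -- tendsto atTop at lam (k+1)
  have hTop : Filter.Tendsto F (nhdsWithin (lam (k + 1)) (Set.Iio (lam (k + 1)))) Filter.atTop := by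
    set C : ℝ := ∑' n, ite (n = k + 1) 0 (f n m) with hCdef
    have hub : ∀ z ∈ Ico m (lam (k + 1)), f (k + 1) z + C ≤ F z := by
      intro z hz
      have hzIoo : z ∈ Ioo (lam k) (lam (k + 1)) := ⟨lt_of_lt_of_le hm1 hz.1, hz.2⟩
      have hsz : Summable (fun n => ite (n = k + 1) 0 (f n z)) :=
        ((hsum z hzIoo).update (k + 1) 0).congr fun n => by
          simp [Function.update_apply]
      have hsm : Summable (fun n => ite (n = k + 1) 0 (f n m)) :=
        ((hsum m hmIoo).update (k + 1) 0).congr fun n => by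
          simp [Function.update_apply]
      have h1 : F z = f (k + 1) z + ∑' n, ite (n = k + 1) 0 (f n z) := by
        rw [hF]; exact Summable.tsum_eq_add_tsum_ite (hsum z hzIoo) (k + 1)
      rw [h1, hCdef]
      have : (∑' n, ite (n = k + 1) 0 (f n m)) ≤ ∑' n, ite (n = k + 1) 0 (f n z) := by
        refine Summable.tsum_le_tsum (fun n => ?_) hsm hsz
        by_cases h : n = k + 1
        · simp [h]
        · simp only [if_neg h]
          refine hterm_mono n m z hz.1 ?_
          rcases le_or_gt n k with h' | h'
          · have : lam n ≤ lam k := hmono.monotone h'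
            apply mul_pos_of_neg_of_neg <;> linarith [hm1, hz.1]
          · have hnk : k + 1 < n := lt_of_le_of_ne h' (Ne.symm h)
            have : lam (k + 1) < lam n := hmono hnk
            apply mul_pos <;> linarith [hz.2, hm1]
      linarith
    have hrhs : Tendsto (fun z => f (k + 1) z + C) (𝓝[<] (lam (k + 1))) atTop := by
      have heq : (fun z => f (k + 1) z + C) =
          fun z => w (k + 1) * (lam (k + 1) - z)⁻¹ +
            (C - w (k + 1) * (lam (k + 1) / (lam (k + 1) ^ 2 + 1))) := by
        funext z
        simp only [hfdef]
        rw [one_div]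
        ring
      rw [heq]
      apply tendsto_atTop_add_const_right
      have t2 : Tendsto (fun z => lam (k + 1) - z) (𝓝[<] (lam (k + 1))) (𝓝[>] 0) := by
        apply tendsto_nhdsWithin_of_tendsto_nhds_of_eventually_within
        · exact ((continuous_const.sub continuous_id).tendsto' (lam (k + 1)) 0 (by simp)).mono_left
            nhdsWithin_le_nhds
        · exact eventually_mem_nhdsWithin.mono fun z hz => Set.mem_Ioi.mpr (sub_pos.mpr hz)
      have t3 : Tendsto (fun z => (lam (k + 1) - z)⁻¹) (𝓝[<] (lam (k + 1))) atTop :=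
        tendsto_inv_nhdsGT_zero.comp t2
      exact (tendsto_const_mul_atTop_of_pos (hw (k + 1))).mpr t3
    refine tendsto_atTop_mono' _ ?_ hrhs
    filter_upwards [Ico_mem_nhdsLT_of_mem (⟨hm2, le_refl _⟩ : lam (k + 1) ∈ Ioc m (lam (k + 1)))]
      with z hz
    exact hub z hz
  refine ⟨hSM, hCO, hBot, hTop, ?_⟩
  intro α
  have hIoomem1 : Ioo (lam k) (lam (k + 1)) ∈ 𝓝[>] (lam k) :=
    Ioo_mem_nhdsGT_of_mem ⟨le_refl _, hkk⟩
  have hIoomem2 : Ioo (lam k) (lam (k + 1)) ∈ 𝓝[<] (lam (k + 1)) :=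
    Ioo_mem_nhdsLT_of_mem ⟨hkk, le_refl _⟩
  obtain ⟨z1, hz1F, hz1m⟩ := ((hBot.eventually (eventually_lt_atBot α)).and
    (eventually_of_mem hIoomem1 fun z hz => hz)).exists
  obtain ⟨z2, hz2F, hz2m⟩ := ((hTop.eventually (eventually_gt_atTop α)).and
    (eventually_of_mem hIoomem2 fun z hz => hz)).exists
  have h12 : z1 < z2 := by
    by_contra h
    rcases eq_or_lt_of_le (not_lt.mp h) with h' | h'
    · rw [← h'] at hz1F; linarith
    · have := hSM hz2m hz1m h'
      linarith
  have hsub : Icc z1 z2 ⊆ Ioo (lam k) (lam (k + 1)) := fun x hx =>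
    ⟨lt_of_lt_of_le hz1m.1 hx.1, lt_of_le_of_lt hx.2 hz2m.2⟩
  have hivt := intermediate_value_Icc h12.le (hCO.mono hsub)
  obtain ⟨z, hzmem, hzF⟩ := hivt ⟨hz1F.le, hz2F.le⟩
  refine ⟨z, ⟨hsub hzmem, hzF⟩, ?_⟩
  rintro y ⟨hym, hyF⟩
  exact hSM.injOn hym (hsub hzmem) (by rw [hyF, hzF])
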